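/- Let t be a real number with 2.8 ≤ t ≤ 5.78. Then F(0.8194, t) ≥ 0, where F(λ,t) = λ·(−1 + (t−3π/2)²/2 − (t−3π/2)⁴/24) + (−1 + (λt−3π/2)²/2 − (λt−3π/2)⁴/24) + λ(1−λ²)·(1 + 1/6560)·(t − t³/39366 + 1 − (t−3π/2)²/2). Moreover, the same function satisfies F(0.5, t) ≥ 0 for 2.8 ≤ t ≤ 5. -/

import Mathlib

open Real

noncomputable def F (l t : ℝ) : ℝ :=
  l * (-1 + (t - 3 * π / 2) ^ 2 / 2 - (t - 3 * π / 2) ^ 4 / 24) +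
    (-1 + (l * t - 3 * π / 2) ^ 2 / 2 - (l * t - 3 * π / 2) ^ 4 / 24) +
    l * (1 - l ^ 2) * (1 + 1 / 6560) *
      (t - t ^ 3 / 39366 + 1 - (t - 3 * π / 2) ^ 2 / 2)

lemma aux1 (t p : ℝ) (ht0 : 2.8 ≤ t) (ht1 : t ≤ 5.78)
    (hp1 : 3.141592 ≤ p) (hp2 : p ≤ 3.141593) :
    0.8194 * (-1 + (t - 3 * p / 2) ^ 2 / 2 - (t - 3 * p / 2) ^ 4 / 24) +
    (-1 + (0.8194 * t - 3 * p / 2) ^ 2 / 2 - (0.8194 * t - 3 * p / 2) ^ 4 / 24) +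
    0.8194 * (1 - 0.8194 ^ 2) * (1 + 1 / 6560) *
      (t - t ^ 3 / 39366 + 1 - (t - 3 * p / 2) ^ 2 / 2) ≥ 0 := by
  have h1 : (t - 2.8) * (5.78 - t) ≥ 0 := mul_nonneg (by linarith) (by linarith)
  have h2 : (p - 3.141592) * (3.141593 - p) ≥ 0 := mul_nonneg (by linarith) (by linarith)
  nlinarith [h1, h2, mul_nonneg h1 h1, mul_nonneg h1 h2, mul_nonneg h2 h2,
    sq_nonneg (t - 5.0458), mul_nonneg h1 (sq_nonneg (t-5.0458)),
    mul_nonneg h1 (sq_nonneg (t-4)), sq_nonneg (t*t - 25.46),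
    mul_nonneg (sub_nonneg.2 ht0) (sub_nonneg.2 ht1)]

lemma aux2 (t p : ℝ) (ht0 : 2.8 ≤ t) (ht1 : t ≤ 5)
    (hp1 : 3.141592 ≤ p) (hp2 : p ≤ 3.141593) :
    0.5 * (-1 + (t - 3 * p / 2) ^ 2 / 2 - (t - 3 * p / 2) ^ 4 / 24) +
    (-1 + (0.5 * t - 3 * p / 2) ^ 2 / 2 - (0.5 * t - 3 * p / 2) ^ 4 / 24) +
    0.5 * (1 - 0.5 ^ 2) * (1 + 1 / 6560) *
      (t - t ^ 3 / 39366 + 1 - (t - 3 * p / 2) ^ 2 / 2) ≥ 0 := by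
  have h1 : (t - 2.8) * (5 - t) ≥ 0 := mul_nonneg (by linarith) (by linarith)
  have h2 : (p - 3.141592) * (3.141593 - p) ≥ 0 := mul_nonneg (by linarith) (by linarith)
  nlinarith [h1, h2, mul_nonneg h1 h1, mul_nonneg h1 h2, mul_nonneg h2 h2,
    sq_nonneg (t - 4), mul_nonneg h1 (sq_nonneg (t-4)), sq_nonneg (t*t-16),
    mul_nonneg (sub_nonneg.2 ht0) (sub_nonneg.2 ht1)]

theorem stmt_19 (t : ℝ) (ht0 : 2.8 ≤ t) (ht1 : t ≤ 5.78) :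
    F 0.8194 t ≥ 0 ∧ (t ≤ 5 → F 0.5 t ≥ 0) := by
  have hp1 : (3.141592 : ℝ) ≤ π := le_of_lt pi_gt_d6
  have hp2 : π ≤ (3.141593 : ℝ) := le_of_lt pi_lt_d6
  exact ⟨aux1 t π ht0 ht1 hp1 hp2, fun ht5 => aux2 t π ht0 ht5 hp1 hp2⟩
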